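/- Every tournament on at least 2^n vertices contains a transitive subtournament on at least n vertices. -/
import Mathlib


private lemma insert_trans_dom {V : Type*} [DecidableEq V] (r : V → V → Prop) (hirr : ∀ x, ¬ r x x)
    (v : V) (S : Finset V)
    (hdom : ∀ y ∈ S, r v y ∧ ¬ r y v)
    (hStr : ∀ x ∈ S, ∀ y ∈ S, ∀ z ∈ S, r x y → r y z → r x z) :
    ∀ x ∈ insert v S, ∀ y ∈ insert v S, ∀ z ∈ insert v S,
      r x y → r y z → r x z := by
  intro x hx y hy z hz hxy hyz
  rcases Finset.mem_insert.mp hx with h1 | hx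
  · rw [h1] at hxy ⊢
    rcases Finset.mem_insert.mp hz with h3 | hz
    · rw [h3] at hyz ⊢
      rcases Finset.mem_insert.mp hy with h2 | hy
      · rw [h2] at hxy; exact absurd hxy (hirr _)
      · exact absurd hyz (hdom y hy).2
    · exact (hdom z hz).1
  · rcases Finset.mem_insert.mp hy with h2 | hy
    · rw [h2] at hxy; exact absurd hxy (hdom x hx).2
    · rcases Finset.mem_insert.mp hz with h3 | hz
      · rw [h3] at hyz; exact absurd hyz (hdom y hy).2
      · exact hStr x hx y hy z hz hxy hyz

private lemma insert_trans_sub {V : Type*} [DecidableEq V] (r : V → V → Prop) (hirr : ∀ x, ¬ r x x)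
    (v : V) (S : Finset V)
    (hdom : ∀ y ∈ S, r y v ∧ ¬ r v y)
    (hStr : ∀ x ∈ S, ∀ y ∈ S, ∀ z ∈ S, r x y → r y z → r x z) :
    ∀ x ∈ insert v S, ∀ y ∈ insert v S, ∀ z ∈ insert v S,
      r x y → r y z → r x z := by
  intro x hx y hy z hz hxy hyz
  rcases Finset.mem_insert.mp hx with h1 | hx
  · rw [h1] at hxy ⊢
    rcases Finset.mem_insert.mp hy with h2 | hy
    · rw [h2] at hxy; exact absurd hxy (hirr _)
    · exact absurd hxy (hdom y hy).2
  · rcases Finset.mem_insert.mp hy with h2 | hy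
    · rw [h2] at hxy hyz
      rcases Finset.mem_insert.mp hz with h3 | hz
      · rw [h3] at hyz; exact absurd hyz (hirr _)
      · exact absurd hyz (hdom z hz).2
    · rcases Finset.mem_insert.mp hz with h3 | hz
      · rw [h3] at hyz ⊢; exact (hdom x hx).1
      · exact hStr x hx y hy z hz hxy hyz

open Finset in
private lemma tourn_aux {V : Type*} (r : V → V → Prop) (hirr : ∀ x, ¬ r x x)
    (htot : ∀ x y : V, x ≠ y → Xor' (r x y) (r y x)) :
    ∀ (n : ℕ) (A : Finset V), 2 ^ n ≤ A.card →
      ∃ S : Finset V, S ⊆ A ∧ n ≤ S.card ∧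
        ∀ x ∈ S, ∀ y ∈ S, ∀ z ∈ S, r x y → r y z → r x z := by
  classical
  intro n
  induction n with
  | zero =>
    intro A _
    exact ⟨∅, by simp, by simp, by simp⟩
  | succ n ih =>
    intro A hA
    have hpos : 0 < A.card := lt_of_lt_of_le (by positivity) hA
    obtain ⟨v, hv⟩ := Finset.card_pos.mp hpos
    set W := (A.erase v).filter (fun x => r v x) with hW
    set L := (A.erase v).filter (fun x => ¬ r v x) with hL
    have hcard : W.card + L.card = A.card - 1 := by
      rw [hW, hL, Finset.card_filter_add_card_filter_not,
        Finset.card_erase_of_mem hv]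
    have hbig : 2 ^ n ≤ W.card ∨ 2 ^ n ≤ L.card := by
      by_contra h
      push_neg at h
      have : W.card + L.card < 2 ^ n + 2 ^ n := Nat.add_lt_add h.1 h.2
      rw [hcard] at this
      have h2 : 2 ^ (n + 1) = 2 ^ n + 2 ^ n := by ring
      omega
    have hWmem : ∀ x ∈ W, x ∈ A ∧ x ≠ v ∧ r v x ∧ ¬ r x v := by
      intro x hx
      rw [hW, Finset.mem_filter, Finset.mem_erase] at hx
      refine ⟨hx.1.2, hx.1.1, hx.2, ?_⟩
      rcases htot v x (Ne.symm hx.1.1) with ⟨_, h2⟩ | ⟨_, h2⟩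
      · exact h2
      · exact absurd hx.2 h2
    have hLmem : ∀ x ∈ L, x ∈ A ∧ x ≠ v ∧ r x v ∧ ¬ r v x := by
      intro x hx
      rw [hL, Finset.mem_filter, Finset.mem_erase] at hx
      refine ⟨hx.1.2, hx.1.1, ?_, hx.2⟩
      rcases htot v x (Ne.symm hx.1.1) with ⟨h1, _⟩ | ⟨h1, _⟩
      · exact absurd h1 hx.2
      · exact h1
    rcases hbig with hb | hb
    · obtain ⟨S, hSW, hScard, hStr⟩ := ih W hb
      have hvS : v ∉ S := fun h => (hWmem v (hSW h)).2.1 rfl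
      refine ⟨insert v S, ?_, ?_, ?_⟩
      · intro x hx
        rcases Finset.mem_insert.mp hx with rfl | hx
        · exact hv
        · exact (hWmem x (hSW hx)).1
      · rw [Finset.card_insert_of_notMem hvS]; omega
      · exact insert_trans_dom r hirr v S
          (fun y hy => ⟨(hWmem y (hSW hy)).2.2.1, (hWmem y (hSW hy)).2.2.2⟩) hStr
    · obtain ⟨S, hSL, hScard, hStr⟩ := ih L hb
      have hvS : v ∉ S := fun h => (hLmem v (hSL h)).2.1 rfl
      refine ⟨insert v S, ?_, ?_, ?_⟩
      · intro x hx
        rcases Finset.mem_insert.mp hx with rfl | hx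
        · exact hv
        · exact (hLmem x (hSL hx)).1
      · rw [Finset.card_insert_of_notMem hvS]; omega
      · exact insert_trans_sub r hirr v S
          (fun y hy => ⟨(hLmem y (hSL hy)).2.2.1, (hLmem y (hSL hy)).2.2.2⟩) hStr

/-- Every tournament on at least `2^n` vertices contains a transitive
subtournament on at least `n` vertices. -/
theorem tournament_transitive_subtournament {V : Type*} [Fintype V]
    (r : V → V → Prop) (hirr : ∀ x, ¬ r x x)
    (htot : ∀ x y : V, x ≠ y → Xor' (r x y) (r y x))
    (n : ℕ) (hcard : 2 ^ n ≤ Fintype.card V) :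
    ∃ S : Finset V, n ≤ S.card ∧
      ∀ x ∈ S, ∀ y ∈ S, ∀ z ∈ S, r x y → r y z → r x z := by
  obtain ⟨S, _, h1, h2⟩ := tourn_aux r hirr htot n Finset.univ
    (by simpa using hcard)
  exact ⟨S, h1, h2⟩
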